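/- Assume the discrete-time system is exponentially stable (|λ| < 1 for all λ in the spectrum of A). Let Y_N be a finite-dimensional subspace of Y with Y_N ⊆ ran P(1) and r = dim Y_N, let Q_N : Y → Y be a bounded projection with range Y_N, let G₂₀ : Y → ℂ^r be a bounded operator whose restriction to Y_N is a bijection onto ℂ^r, and set Z = ℂ^r, G₁ = I, G₂ = G₂₀ ∘ Q_N. Let K₀ : ℂ^r → U be a bounded operator such that the spectrum of the r×r matrix G₂ P(1) K₀ is contained in the open left half-plane {λ ∈ ℂ : Re λ < 0}, and set K = ε K₀. Then there exists ε* > 0 such that for every 0 < ε ≤ ε*: the closed-loop system is exponentially stable, and for every w ∈ U_d and y_ref ∈ Y (with the one-dimensional exosystem S = 1, E v = v·w, F v = −v·y_ref, v₀ = 1) and all initial states x₀ ∈ X, z₀ ∈ ℂ^r, the regulation error satisfies ‖e_n − (I − Q_N)(P(1) K z + P_d(1) w − y_ref)‖ → 0 as n → ∞, where z ∈ ℂ^r is the unique solution of Q_N(P(1) K z) = Q_N y_ref − Q_N(P_d(1) w). -/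

import Mathlib

noncomputable section

open ContinuousLinearMap

variable {X Z U Ud Y W : Type*}
  [NormedAddCommGroup X] [NormedSpace ℂ X]
  [NormedAddCommGroup Z] [NormedSpace ℂ Z]
  [NormedAddCommGroup U] [NormedSpace ℂ U]
  [NormedAddCommGroup Ud] [NormedSpace ℂ Ud]
  [NormedAddCommGroup Y] [NormedSpace ℂ Y]
  [NormedAddCommGroup W] [NormedSpace ℂ W]

/-- The closed-loop system operator `A_e` on `X × Z`:
`A_e(x,z) = (Ax + BKz, G₂Cx + G₁z + G₂DKz)`. -/
def Ae (A : X →L[ℂ] X) (B : U →L[ℂ] X) (C : X →L[ℂ] Y) (D : U →L[ℂ] Y)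
    (G₁ : Z →L[ℂ] Z) (G₂ : Y →L[ℂ] Z) (K : Z →L[ℂ] U) : (X × Z) →L[ℂ] (X × Z) :=
  ((A.comp (fst ℂ X Z)) + ((B.comp K).comp (snd ℂ X Z))).prod
    ((G₂.comp (C.comp (fst ℂ X Z))) + (G₁.comp (snd ℂ X Z))
      + ((G₂.comp (D.comp K)).comp (snd ℂ X Z)))

/-- The closed-loop input operator `B_e v = (B_d E v, G₂(D_d E v + F v))`. -/
def Be (Bd : Ud →L[ℂ] X) (Dd : Ud →L[ℂ] Y) (E : W →L[ℂ] Ud) (F : W →L[ℂ] Y)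
    (G₂ : Y →L[ℂ] Z) : W →L[ℂ] (X × Z) :=
  (Bd.comp E).prod (G₂.comp ((Dd.comp E) + F))

/-- The closed-loop output operator `C_e(x,z) = Cx + DKz`. -/
def Ce (C : X →L[ℂ] Y) (D : U →L[ℂ] Y) (K : Z →L[ℂ] U) : (X × Z) →L[ℂ] Y :=
  C.comp (fst ℂ X Z) + (D.comp K).comp (snd ℂ X Z)

/-- The closed-loop feedthrough operator `D_e = D_d E + F`. -/
def De (Dd : Ud →L[ℂ] Y) (E : W →L[ℂ] Ud) (F : W →L[ℂ] Y) : W →L[ℂ] Y :=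
  (Dd.comp E) + F

/-- The controller `(G₁, G₂, K)` solves the output regulation problem: the closed-loop
system is exponentially stable and the regulation error decays at a uniform exponential
rate for all initial states of the system, the controller and the exosystem. -/
def SolvesORP (A : X →L[ℂ] X) (B : U →L[ℂ] X) (Bd : Ud →L[ℂ] X)
    (C : X →L[ℂ] Y) (D : U →L[ℂ] Y) (Dd : Ud →L[ℂ] Y)
    (S : W →L[ℂ] W) (E : W →L[ℂ] Ud) (F : W →L[ℂ] Y)
    (G₁ : Z →L[ℂ] Z) (G₂ : Y →L[ℂ] Z) (K : Z →L[ℂ] U) : Prop :=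
  (∀ lam ∈ spectrum ℂ (Ae A B C D G₁ G₂ K), ‖lam‖ < 1) ∧
  ∃ M α : ℝ, 0 < M ∧ 0 < α ∧
    ∀ (x₀ : X) (z₀ : Z) (v₀ : W) (v : ℕ → W) (xe : ℕ → X × Z),
      v 0 = v₀ → (∀ n, v (n + 1) = S (v n)) →
      xe 0 = (x₀, z₀) →
      (∀ n, xe (n + 1) = Ae A B C D G₁ G₂ K (xe n) + Be Bd Dd E F G₂ (v n)) →
      ∀ n : ℕ, ‖Ce C D K (xe n) + De Dd E F (v n)‖
        ≤ M * Real.exp (-(α * n)) * (‖x₀‖ + ‖z₀‖ + ‖v₀‖)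

/-- The controller `(G₁, G₂, K)` solves the robust output regulation problem: it solves
the output regulation problem and retains exponential decay of the regulation error for
every perturbation of the operators `(A, B, B_d, C, D, D_d, E, F)` that preserves the
exponential stability of the closed-loop system. -/
def SolvesRORP (A : X →L[ℂ] X) (B : U →L[ℂ] X) (Bd : Ud →L[ℂ] X)
    (C : X →L[ℂ] Y) (D : U →L[ℂ] Y) (Dd : Ud →L[ℂ] Y)
    (S : W →L[ℂ] W) (E : W →L[ℂ] Ud) (F : W →L[ℂ] Y)
    (G₁ : Z →L[ℂ] Z) (G₂ : Y →L[ℂ] Z) (K : Z →L[ℂ] U) : Prop :=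
  SolvesORP A B Bd C D Dd S E F G₁ G₂ K ∧
  ∀ (A' : X →L[ℂ] X) (B' : U →L[ℂ] X) (Bd' : Ud →L[ℂ] X)
    (C' : X →L[ℂ] Y) (D' : U →L[ℂ] Y) (Dd' : Ud →L[ℂ] Y)
    (E' : W →L[ℂ] Ud) (F' : W →L[ℂ] Y),
    (∀ lam ∈ spectrum ℂ (Ae A' B' C' D' G₁ G₂ K), ‖lam‖ < 1) →
    ∃ M α : ℝ, 0 < M ∧ 0 < α ∧
      ∀ (x₀ : X) (z₀ : Z) (v₀ : W) (v : ℕ → W) (xe : ℕ → X × Z),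
        v 0 = v₀ → (∀ n, v (n + 1) = S (v n)) →
        xe 0 = (x₀, z₀) →
        (∀ n, xe (n + 1) = Ae A' B' C' D' G₁ G₂ K (xe n) + Be Bd' Dd' E' F' G₂ (v n)) →
        ∀ n : ℕ, ‖Ce C' D' K (xe n) + De Dd' E' F' (v n)‖
          ≤ M * Real.exp (-(α * n)) * (‖x₀‖ + ‖z₀‖ + ‖v₀‖)

/-- The transfer function `P(1) = C(I−A)⁻¹B + D` of the system at `μ = 1`. -/
def P1 (A : X →L[ℂ] X) (B : U →L[ℂ] X) (C : X →L[ℂ] Y) (D : U →L[ℂ] Y) : U →L[ℂ] Y :=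
  C.comp ((Ring.inverse ((1 : X →L[ℂ] X) - A)).comp B) + D

/-- The disturbance transfer function `P_d(1) = C(I−A)⁻¹B_d + D_d` at `μ = 1`. -/
def Pd1 (A : X →L[ℂ] X) (Bd : Ud →L[ℂ] X) (C : X →L[ℂ] Y) (Dd : Ud →L[ℂ] Y) :
    Ud →L[ℂ] Y :=
  C.comp ((Ring.inverse ((1 : X →L[ℂ] X) - A)).comp Bd) + Dd

open Filter Topology

open Filter Topology

section AuxAlg
variable {𝔸 : Type*} [NormedRing 𝔸] [NormedAlgebra ℂ 𝔸] [CompleteSpace 𝔸]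

/-- Norm bound for the resolvent far away. -/
lemma aux_inv_norm_far (a : 𝔸) (h1 : ‖(1:𝔸)‖ ≤ 1) (lam : ℂ)
    (h : IsUnit (lam • (1:𝔸) - a)) (hl : ‖a‖ + 1 ≤ ‖lam‖) :
    ‖Ring.inverse (lam • (1:𝔸) - a)‖ ≤ 1 := by
  set y := Ring.inverse (lam • (1:𝔸) - a) with hy
  have hmul : (lam • (1:𝔸) - a) * y = 1 := Ring.mul_inverse_cancel _ h
  have hid : lam • y = 1 + a * y := by
    have : lam • ((1:𝔸) * y) - a * y = 1 := by
      rw [← smul_mul_assoc, ← sub_mul, hmul]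
    rw [one_mul] at this
    rw [← this]; abel
  have hnorm : ‖lam‖ * ‖y‖ ≤ 1 + ‖a‖ * ‖y‖ := by
    calc ‖lam‖ * ‖y‖ = ‖lam • y‖ := (norm_smul lam y).symm
      _ = ‖1 + a * y‖ := by rw [hid]
      _ ≤ ‖(1:𝔸)‖ + ‖a * y‖ := norm_add_le _ _
      _ ≤ 1 + ‖a‖ * ‖y‖ := by
          gcongr
          exact norm_mul_le _ _
  nlinarith [norm_nonneg y, norm_nonneg a]

/-- Uniform bound on the resolvent on a closed subset of the resolvent set. -/
lemma aux_resolvent_bound (a : 𝔸) (h1 : ‖(1:𝔸)‖ ≤ 1) (F : Set ℂ) (hF : IsClosed F)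
    (hres : ∀ lam ∈ F, IsUnit (lam • (1:𝔸) - a)) :
    ∃ m : ℝ, 1 ≤ m ∧ ∀ lam ∈ F, ‖Ring.inverse (lam • (1:𝔸) - a)‖ ≤ m := by
  set K := F ∩ Metric.closedBall (0:ℂ) (‖a‖ + 1) with hK
  have hKc : IsCompact K := (isCompact_closedBall (0:ℂ) (‖a‖+1)).inter_left hF
  have hcont : ContinuousOn (fun lam : ℂ => Ring.inverse (lam • (1:𝔸) - a)) K := by
    intro lam hlam
    have hu := hres lam hlam.1
    have hc1 : ContinuousAt (fun lam : ℂ => lam • (1:𝔸) - a) lam :=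
      ((continuous_id.smul continuous_const).sub continuous_const).continuousAt
    have hc2 : ContinuousAt Ring.inverse (lam • (1:𝔸) - a) := by
      have := NormedRing.inverse_continuousAt hu.unit
      rwa [hu.unit_spec] at this
    exact (ContinuousAt.comp (x := lam) hc2 hc1).continuousWithinAt
  obtain ⟨C, hC⟩ := hKc.exists_bound_of_continuousOn hcont
  refine ⟨max C 1, le_max_right _ _, fun lam hlam => ?_⟩
  by_cases hb : ‖lam‖ ≤ ‖a‖ + 1
  · have : lam ∈ K := ⟨hlam, by simpa [Metric.mem_closedBall, Complex.dist_eq] using hb⟩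
    calc ‖Ring.inverse (lam • (1:𝔸) - a)‖ = ‖(fun lam : ℂ => Ring.inverse (lam • (1:𝔸) - a)) lam‖ := rfl
      _ ≤ C := by simpa using hC lam this
      _ ≤ max C 1 := le_max_left _ _
  · exact (aux_inv_norm_far a h1 lam (hres lam hlam) (le_of_not_ge hb)).trans (le_max_right _ _)

/-- One minus a small element is a unit. -/
lemma aux_isUnit_one_sub (a : 𝔸) (h : ‖a‖ < 1) : IsUnit ((1:𝔸) - a) :=
  (Units.oneSub a h).isUnit

/-- If the spectrum lies in the open unit disc, powers tend to zero in norm. -/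
lemma aux_pow_tendsto (a : 𝔸) (h : ∀ lam ∈ spectrum ℂ a, ‖lam‖ < 1) :
    Tendsto (fun n : ℕ => ‖a ^ n‖) atTop (𝓝 0) := by
  have hsr : spectralRadius ℂ a < 1 := by
    by_cases hne : (spectrum ℂ a).Nonempty
    · have := spectrum.spectralRadius_lt_of_forall_lt_of_nonempty hne (r := 1)
        (fun k hk => by
          have h' := h k hk
          simpa using (show ‖k‖₊ < 1 from by exact_mod_cast h'))
      simpa using this
    · rw [Set.not_nonempty_iff_eq_empty] at hne
      simp only [spectralRadius, hne]
      simpa using zero_lt_one (α := ENNReal)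
  obtain ⟨t, ht1, ht2⟩ := exists_between hsr
  have htne : t ≠ ⊤ := ne_top_of_lt ht2
  set ρ : NNReal := t.toNNReal with hρ
  have htρ : t = (ρ : ENNReal) := (ENNReal.coe_toNNReal htne).symm
  have hρ1 : (ρ : ℝ) < 1 := by
    have := ht2; rw [htρ] at this
    exact_mod_cast this
  have hev : ∀ᶠ n : ℕ in atTop, (‖a ^ n‖₊ : ENNReal) ^ (1 / (n:ℝ)) < (ρ : ENNReal) :=
    (spectrum.pow_nnnorm_pow_one_div_tendsto_nhds_spectralRadius a).eventually_lt_const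
      (by rw [← htρ]; exact ht1)
  have hbound : ∀ᶠ n : ℕ in atTop, ‖a ^ n‖ ≤ (ρ:ℝ) ^ n := by
    filter_upwards [hev, eventually_ge_atTop 1] with n hn hn1
    have hne : (n:ℝ) ≠ 0 := by positivity
    have : ((‖a ^ n‖₊ : ENNReal) ^ (1 / (n:ℝ))) ^ (n:ℝ) ≤ ((ρ:ENNReal)) ^ (n:ℝ) :=
      ENNReal.rpow_le_rpow hn.le (by positivity)
    rw [← ENNReal.rpow_mul, one_div, inv_mul_cancel₀ hne, ENNReal.rpow_one,
      ENNReal.rpow_natCast, ← ENNReal.coe_pow, ENNReal.coe_le_coe] at this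
    calc ‖a ^ n‖ = ((‖a ^ n‖₊ : NNReal) : ℝ) := rfl
      _ ≤ ((ρ ^ n : NNReal) : ℝ) := by exact_mod_cast this
      _ = (ρ:ℝ) ^ n := by push_cast; ring
  refine squeeze_zero_norm' ?_ (tendsto_pow_atTop_nhds_zero_of_lt_one ρ.2 hρ1)
  filter_upwards [hbound] with n hn
  simpa [Real.norm_eq_abs, abs_of_nonneg (norm_nonneg _)] using hn

end AuxAlg

open ContinuousLinearMap

section Blk
variable {X Z : Type*}
  [NormedAddCommGroup X] [NormedSpace ℂ X]
  [NormedAddCommGroup Z] [NormedSpace ℂ Z]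

/-- Block operator on `X × Z`. -/
def blk (a : X →L[ℂ] X) (b : Z →L[ℂ] X) (c : X →L[ℂ] Z) (d : Z →L[ℂ] Z) :
    (X × Z) →L[ℂ] (X × Z) :=
  ((a.comp (fst ℂ X Z)) + (b.comp (snd ℂ X Z))).prod
    ((c.comp (fst ℂ X Z)) + (d.comp (snd ℂ X Z)))

lemma blk_apply (a : X →L[ℂ] X) (b : Z →L[ℂ] X) (c : X →L[ℂ] Z) (d : Z →L[ℂ] Z)
    (v : X × Z) : blk a b c d v = (a v.1 + b v.2, c v.1 + d v.2) := rfl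

lemma isUnit_blk (a : X →L[ℂ] X) (b : Z →L[ℂ] X) (c : X →L[ℂ] Z) (d : Z →L[ℂ] Z)
    (ha : IsUnit a) (hs : IsUnit (d - c.comp ((Ring.inverse a).comp b))) :
    IsUnit (blk a b c d) := by
  set α := Ring.inverse a with hα
  set s := d - c.comp (α.comp b) with hsdef
  set σ := Ring.inverse s with hσ
  have haα : a.comp α = 1 := by rw [← mul_def]; exact Ring.mul_inverse_cancel _ ha
  have hαa : α.comp a = 1 := by rw [← mul_def]; exact Ring.inverse_mul_cancel _ ha
  have hsσ : s.comp σ = 1 := by rw [← mul_def]; exact Ring.mul_inverse_cancel _ hs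
  have hσs : σ.comp s = 1 := by rw [← mul_def]; exact Ring.inverse_mul_cancel _ hs
  have haα' : ∀ v : X, a (α v) = v := fun v => by
    have := DFunLike.congr_fun haα v; simpa using this
  have hαa' : ∀ v : X, α (a v) = v := fun v => by
    have := DFunLike.congr_fun hαa v; simpa using this
  have hdσ' : ∀ v : Z, d (σ v) = v + c (α (b (σ v))) := fun v => by
    have := DFunLike.congr_fun hsσ v
    simp only [comp_apply, ContinuousLinearMap.one_apply, hsdef, sub_apply] at this
    linear_combination (norm := module) this
  have hσd' : ∀ v : Z, σ (d v) = v + σ (c (α (b v))) := fun v => by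
    have := DFunLike.congr_fun hσs v
    simp only [comp_apply, ContinuousLinearMap.one_apply, hsdef, sub_apply, map_sub] at this
    linear_combination (norm := module) this
  set p : X →L[ℂ] X := α + (α.comp b).comp (σ.comp (c.comp α)) with hp
  set q : Z →L[ℂ] X := -((α.comp b).comp σ) with hq
  set rr : X →L[ℂ] Z := -(σ.comp (c.comp α)) with hrr
  rw [isUnit_iff_exists]
  refine ⟨blk p q rr σ, ?_, ?_⟩ <;>
  · rw [mul_def]
    ext v <;>
    · simp only [comp_apply, blk_apply, hp, hq, hrr, add_apply, neg_apply, map_add,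
        map_neg, map_zero, ContinuousLinearMap.one_apply, inl_apply, inr_apply, zero_add, add_zero,
        haα', hdσ', hαa', hσd']
      abel

end Blk


set_option maxHeartbeats 4000000 in
/-- the finite-dimensional low-gain controller `(I, G₂₀Q_N, εK₀)` achieves,
for all sufficiently small `ε > 0`, exponential closed-loop stability and approximate
output regulation: the regulation error converges to
`(I − Q_N)(P(1)Kz + P_d(1)w − y_ref)` where `z` is the unique solution of
`Q_N P(1)Kz = Q_N y_ref − Q_N P_d(1)w`. -/
theorem approximate_rorp_low_gain_controller
    {X U Ud Y : Type*}
    [NormedAddCommGroup X] [NormedSpace ℂ X] [CompleteSpace X]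
    [NormedAddCommGroup U] [InnerProductSpace ℂ U] [CompleteSpace U]
    [NormedAddCommGroup Ud] [InnerProductSpace ℂ Ud] [CompleteSpace Ud]
    [NormedAddCommGroup Y] [InnerProductSpace ℂ Y] [CompleteSpace Y]
    (A : X →L[ℂ] X) (B : U →L[ℂ] X) (Bd : Ud →L[ℂ] X)
    (C : X →L[ℂ] Y) (D : U →L[ℂ] Y) (Dd : Ud →L[ℂ] Y)
    (hstab : ∀ lam ∈ spectrum ℂ A, ‖lam‖ < 1)
    (YN : Submodule ℂ Y) [FiniteDimensional ℂ YN]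
    (hYNran : (YN : Set Y) ⊆ Set.range ⇑(P1 A B C D))
    (r : ℕ) (hrank : Module.finrank ℂ YN = r)
    (QN : Y →L[ℂ] Y) (hproj : QN.comp QN = QN) (hranQN : LinearMap.range (QN : Y →ₗ[ℂ] Y) = YN)
    (G₂₀ : Y →L[ℂ] EuclideanSpace ℂ (Fin r))
    (hbij : Function.Bijective fun y : YN => G₂₀ (y : Y))
    (K₀ : EuclideanSpace ℂ (Fin r) →L[ℂ] U)
    (hspec : ∀ lam ∈ spectrum ℂ ((G₂₀.comp QN).comp ((P1 A B C D).comp K₀)),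
      lam.re < 0) :
    ∃ εstar : ℝ, 0 < εstar ∧ ∀ ε : ℝ, 0 < ε → ε ≤ εstar →
      (∀ lam ∈ spectrum ℂ
          (Ae A B C D (1 : EuclideanSpace ℂ (Fin r) →L[ℂ] EuclideanSpace ℂ (Fin r))
            (G₂₀.comp QN) ((ε : ℂ) • K₀)), ‖lam‖ < 1) ∧
      ∀ (w : Ud) (yref : Y) (x₀ : X) (z₀ : EuclideanSpace ℂ (Fin r)),
        (∃! z : EuclideanSpace ℂ (Fin r),
            QN (P1 A B C D (((ε : ℂ) • K₀) z)) = QN yref - QN (Pd1 A Bd C Dd w))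
        ∧ ∀ z : EuclideanSpace ℂ (Fin r),
            QN (P1 A B C D (((ε : ℂ) • K₀) z)) = QN yref - QN (Pd1 A Bd C Dd w) →
            ∀ xe : ℕ → X × EuclideanSpace ℂ (Fin r),
              xe 0 = (x₀, z₀) →
              (∀ n, xe (n + 1)
                  = Ae A B C D
                      (1 : EuclideanSpace ℂ (Fin r) →L[ℂ] EuclideanSpace ℂ (Fin r))
                      (G₂₀.comp QN) ((ε : ℂ) • K₀) (xe n)
                    + Be Bd Dd (ContinuousLinearMap.toSpanSingleton ℂ w)
                        (-(ContinuousLinearMap.toSpanSingleton ℂ yref))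
                        (G₂₀.comp QN) (1 : ℂ)) →
              Filter.Tendsto
                (fun n => ‖Ce C D ((ε : ℂ) • K₀) (xe n)
                    + De Dd (ContinuousLinearMap.toSpanSingleton ℂ w)
                        (-(ContinuousLinearMap.toSpanSingleton ℂ yref)) (1 : ℂ)
                    - ((P1 A B C D (((ε : ℂ) • K₀) z) + Pd1 A Bd C Dd w - yref)
                        - QN (P1 A B C D (((ε : ℂ) • K₀) z)
                            + Pd1 A Bd C Dd w - yref))‖)
                Filter.atTop (nhds 0) := by
  classical
  -- notation
  set Zs := EuclideanSpace ℂ (Fin r) with hZs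
  set G2 : Y →L[ℂ] Zs := G₂₀.comp QN with hG2
  set RA : ℂ → (X →L[ℂ] X) := fun lam => Ring.inverse (lam • (1 : X →L[ℂ] X) - A) with hRA
  set Mop : ℂ → (Zs →L[ℂ] Zs) := fun lam =>
    (G2.comp ((C.comp ((RA lam).comp B)) + D)).comp K₀ with hMop
  have hone : ‖(1 : X →L[ℂ] X)‖ ≤ 1 := by rw [ContinuousLinearMap.one_def]; exact norm_id_le
  have honeZ : ‖(1 : Zs →L[ℂ] Zs)‖ ≤ 1 := by rw [ContinuousLinearMap.one_def]; exact norm_id_le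
  -- units of lam - A for |lam| ≥ 1
  have hAunit : ∀ lam : ℂ, 1 ≤ ‖lam‖ → IsUnit (lam • (1 : X →L[ℂ] X) - A) := by
    intro lam hl
    have : lam ∉ spectrum ℂ A := fun hmem => absurd (hstab lam hmem) (not_lt.mpr hl)
    rw [spectrum.notMem_iff, Algebra.algebraMap_eq_smul_one] at this
    exact this
  -- resolvent bound m₁
  obtain ⟨m₁, hm₁1, hm₁⟩ := aux_resolvent_bound A hone {l : ℂ | 1 ≤ ‖l‖}
    (isClosed_le continuous_const continuous_norm) (fun lam hl => hAunit lam hl)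
  -- resolvent identity and difference bound
  have hRAdiff : ∀ lam : ℂ, 1 ≤ ‖lam‖ →
      RA lam - RA 1 = (1 - lam) • ((RA lam) * (RA 1)) := by
    intro lam hl
    have h1u := hAunit 1 (by simp)
    have hlu := hAunit lam hl
    have e1 : ((1:ℂ) • (1 : X →L[ℂ] X) - A) * RA 1 = 1 := Ring.mul_inverse_cancel _ h1u
    have e2 : RA lam * (lam • (1 : X →L[ℂ] X) - A) = 1 := Ring.inverse_mul_cancel _ hlu
    have key : ((1:ℂ) • (1 : X →L[ℂ] X) - A) - (lam • (1 : X →L[ℂ] X) - A)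
        = (1 - lam) • (1 : X →L[ℂ] X) := by rw [sub_smul]; abel
    calc RA lam - RA 1
        = RA lam * (((1:ℂ) • (1 : X →L[ℂ] X) - A) * RA 1)
          - (RA lam * (lam • (1 : X →L[ℂ] X) - A)) * RA 1 := by
          rw [e1, e2, mul_one, one_mul]
      _ = RA lam * ((((1:ℂ) • (1 : X →L[ℂ] X) - A) - (lam • (1 : X →L[ℂ] X) - A)) * RA 1) := by
          noncomm_ring
      _ = (1 - lam) • (RA lam * RA 1) := by
          rw [key, smul_mul_assoc, one_mul, mul_smul_comm]
  set Lc : ℝ := ‖G2‖ * ‖C‖ * ‖B‖ * ‖K₀‖ * m₁ * m₁ with hLc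
  have hMopdiff : ∀ lam : ℂ, 1 ≤ ‖lam‖ → ‖Mop lam - Mop 1‖ ≤ Lc * ‖lam - 1‖ := by
    intro lam hl
    have hdiff : Mop lam - Mop 1
        = (G2.comp (C.comp ((RA lam - RA 1).comp B))).comp K₀ := by
      refine ContinuousLinearMap.ext fun z => ?_
      simp only [hMop, ContinuousLinearMap.sub_apply, ContinuousLinearMap.comp_apply,
        ContinuousLinearMap.add_apply, map_sub, map_add]
      abel
    rw [hdiff]
    have hRAb : ‖RA lam - RA 1‖ ≤ m₁ * m₁ * ‖lam - 1‖ := by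
      rw [hRAdiff lam hl, norm_smul ((1:ℂ)-lam) (RA lam * RA 1)]
      have h1 : ‖RA lam * RA 1‖ ≤ m₁ * m₁ := by
        calc ‖RA lam * RA 1‖ ≤ ‖RA lam‖ * ‖RA 1‖ := norm_mul_le _ _
          _ ≤ m₁ * m₁ := by
              have := hm₁ lam hl
              have := hm₁ 1 (by simp)
              gcongr <;> first
                | exact hm₁ lam hl
                | exact hm₁ 1 (by simp)
      have : ‖(1:ℂ) - lam‖ = ‖lam - 1‖ := norm_sub_rev _ _
      calc ‖(1:ℂ) - lam‖ * ‖RA lam * RA 1‖ ≤ ‖lam - 1‖ * (m₁ * m₁) := by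
            rw [this]; gcongr
        _ = m₁ * m₁ * ‖lam - 1‖ := by ring
    calc ‖(G2.comp (C.comp ((RA lam - RA 1).comp B))).comp K₀‖
        ≤ ‖G2‖ * ‖C‖ * ‖RA lam - RA 1‖ * ‖B‖ * ‖K₀‖ := by
          calc ‖(G2.comp (C.comp ((RA lam - RA 1).comp B))).comp K₀‖
              ≤ ‖G2.comp (C.comp ((RA lam - RA 1).comp B))‖ * ‖K₀‖ := opNorm_comp_le _ _
            _ ≤ (‖G2‖ * ‖C.comp ((RA lam - RA 1).comp B)‖) * ‖K₀‖ := by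
                gcongr; exact opNorm_comp_le _ _
            _ ≤ (‖G2‖ * (‖C‖ * ‖(RA lam - RA 1).comp B‖)) * ‖K₀‖ := by
                gcongr; exact opNorm_comp_le _ _
            _ ≤ (‖G2‖ * (‖C‖ * (‖RA lam - RA 1‖ * ‖B‖))) * ‖K₀‖ := by
                gcongr; exact opNorm_comp_le _ _
            _ = ‖G2‖ * ‖C‖ * ‖RA lam - RA 1‖ * ‖B‖ * ‖K₀‖ := by ring
      _ ≤ ‖G2‖ * ‖C‖ * (m₁ * m₁ * ‖lam - 1‖) * ‖B‖ * ‖K₀‖ := by gcongr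
      _ = Lc * ‖lam - 1‖ := by rw [hLc]; ring
  set m₂ : ℝ := max 1 (‖G2‖ * (‖C‖ * (m₁ * ‖B‖) + ‖D‖) * ‖K₀‖) with hm₂
  have hm₂1 : (1:ℝ) ≤ m₂ := le_max_left _ _
  have hMopbound : ∀ lam : ℂ, 1 ≤ ‖lam‖ → ‖Mop lam‖ ≤ m₂ := by
    intro lam hl
    refine le_trans ?_ (le_max_right _ _)
    calc ‖Mop lam‖ ≤ ‖G2.comp ((C.comp ((RA lam).comp B)) + D)‖ * ‖K₀‖ := opNorm_comp_le _ _
      _ ≤ (‖G2‖ * ‖(C.comp ((RA lam).comp B)) + D‖) * ‖K₀‖ := by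
          gcongr; exact opNorm_comp_le _ _
      _ ≤ (‖G2‖ * (‖C.comp ((RA lam).comp B)‖ + ‖D‖)) * ‖K₀‖ := by
          gcongr; exact norm_add_le _ _
      _ ≤ (‖G2‖ * (‖C‖ * (m₁ * ‖B‖) + ‖D‖)) * ‖K₀‖ := by
          gcongr
          calc ‖C.comp ((RA lam).comp B)‖ ≤ ‖C‖ * ‖(RA lam).comp B‖ := opNorm_comp_le _ _
            _ ≤ ‖C‖ * (‖RA lam‖ * ‖B‖) := by gcongr; exact opNorm_comp_le _ _
            _ ≤ ‖C‖ * (m₁ * ‖B‖) := by gcongr; exact hm₁ lam hl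
      _ = ‖G2‖ * (‖C‖ * (m₁ * ‖B‖) + ‖D‖) * ‖K₀‖ := by ring
  -- identify Mop 1 with the hspec operator
  have hMop1 : Mop 1 = (G₂₀.comp QN).comp ((P1 A B C D).comp K₀) := by
    refine ContinuousLinearMap.ext fun z => ?_
    simp only [hMop, hG2, hRA, P1, ContinuousLinearMap.comp_apply,
      ContinuousLinearMap.add_apply, one_smul]
  -- δ and resolvent bound m₃ for Mop 1
  obtain ⟨δ, hδ, hδspec⟩ : ∃ δ : ℝ, 0 < δ ∧
      ∀ mu : ℂ, -δ ≤ mu.re → mu ∉ spectrum ℂ (Mop 1) := by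
    rw [hMop1]
    by_cases hne : (spectrum ℂ ((G₂₀.comp QN).comp ((P1 A B C D).comp K₀))).Nonempty
    · obtain ⟨mu₀, hmu₀, hmax⟩ := (spectrum.isCompact _).exists_isMaxOn hne
        (Complex.continuous_re.continuousOn)
      have hneg : mu₀.re < 0 := hspec mu₀ hmu₀
      refine ⟨-mu₀.re / 2, by linarith, fun mu hmu hmem => ?_⟩
      have h1 := hmax hmem
      have h2 := hspec mu hmem
      simp only [Set.mem_setOf_eq] at h1
      linarith [h1]
    · exact ⟨1, one_pos, fun mu _ hmem => hne ⟨mu, hmem⟩⟩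
  have hMunit : ∀ mu : ℂ, -δ ≤ mu.re → IsUnit (mu • (1 : Zs →L[ℂ] Zs) - Mop 1) := by
    intro mu hmu
    have := hδspec mu hmu
    rwa [spectrum.notMem_iff, Algebra.algebraMap_eq_smul_one] at this
  obtain ⟨m₃, hm₃1, hm₃⟩ := aux_resolvent_bound (Mop 1) honeZ {mu : ℂ | -δ ≤ mu.re}
    (isClosed_le continuous_const Complex.continuous_re) (fun mu hmu => hMunit mu hmu)
  set Lc' : ℝ := max Lc 1 with hLc'
  have hLc'1 : (1:ℝ) ≤ Lc' := le_max_right _ _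
  set cc : ℝ := 2 * m₂ with hcc
  have hcc2 : (2:ℝ) ≤ cc := by rw [hcc]; linarith
  set εstar : ℝ := min (2 * δ / cc ^ 2) (1 / (2 * m₃ * Lc' * cc)) with hεstar
  have hεstarpos : 0 < εstar := by
    apply lt_min
    · positivity
    · positivity
  refine ⟨εstar, hεstarpos, fun ε hε hεle => ?_⟩
  have hεne : (ε:ℂ) ≠ 0 := Complex.ofReal_ne_zero.mpr hε.ne'
  set K : Zs →L[ℂ] U := (ε:ℂ) • K₀ with hK
  -- the key stability fact
  have hSchurUnit : ∀ lam : ℂ, 1 ≤ ‖lam‖ →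
      IsUnit ((lam - 1) • (1 : Zs →L[ℂ] Zs) - (ε:ℂ) • Mop lam) := by
    intro lam hl
    have hεcmplx : ‖(ε:ℂ)‖ = ε := by
      rw [Complex.norm_real, Real.norm_eq_abs, abs_of_pos hε]
    by_cases hcase : ‖lam - 1‖ < cc * ε
    · -- near 1 : use the matrix condition
      set mu : ℂ := (lam - 1) / (ε:ℂ) with hmu
      have hmure : -δ ≤ mu.re := by
        have hsq : 1 ≤ ‖lam‖ ^ 2 := by nlinarith [norm_nonneg lam]
        have hre : lam.re = (lam - 1).re + 1 := by simp
        have him : lam.im = (lam - 1).im := by simp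
        have hnlam : ‖lam‖ ^ 2 = lam.re ^ 2 + lam.im ^ 2 := by
          rw [Complex.sq_norm, Complex.normSq_apply]; ring
        have hnd : ‖lam - 1‖ ^ 2 = (lam - 1).re ^ 2 + (lam - 1).im ^ 2 := by
          rw [Complex.sq_norm, Complex.normSq_apply]; ring
        have hkey : -(‖lam - 1‖ ^ 2) / 2 ≤ (lam - 1).re := by
          rw [hnd]
          have h2 : 1 ≤ ((lam - 1).re + 1) ^ 2 + (lam - 1).im ^ 2 := by
            rw [← hre, ← him, ← hnlam]; exact hsq
          nlinarith [h2]
        have hbound : -(δ * ε) ≤ (lam - 1).re := by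
          have hεδ : cc ^ 2 * ε ≤ 2 * δ := by
            have := hεle.trans (min_le_left _ _)
            rw [le_div_iff₀ (by positivity)] at this
            rw [mul_comm]; exact this
          nlinarith [norm_nonneg (lam - 1), hε.le]
        have hmure' : mu.re = ε⁻¹ * (lam - 1).re := by
          rw [hmu, div_eq_inv_mul, ← Complex.ofReal_inv, Complex.re_ofReal_mul]
        rw [hmure']
        calc -δ = ε⁻¹ * (-(δ * ε)) := by field_simp
          _ ≤ ε⁻¹ * (lam - 1).re := by
              apply mul_le_mul_of_nonneg_left hbound (by positivity)
      have hmuF : mu ∈ {mu : ℂ | -δ ≤ mu.re} := hmure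
      have hmuu : IsUnit (mu • (1 : Zs →L[ℂ] Zs) - Mop 1) := hMunit mu hmure
      set Rmu : Zs →L[ℂ] Zs := Ring.inverse (mu • (1 : Zs →L[ℂ] Zs) - Mop 1) with hRmu
      set t : Zs →L[ℂ] Zs := Rmu * (Mop lam - Mop 1) with ht
      have htle : ‖t‖ ≤ 1 / 2 := by
        have h1 : ‖t‖ ≤ m₃ * (Lc * ‖lam - 1‖) :=
          (norm_mul_le _ _).trans (by gcongr; exacts [hm₃ mu hmuF, hMopdiff lam hl])
        have h2 : Lc * ‖lam - 1‖ ≤ Lc' * (cc * ε) := by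
          have : Lc ≤ Lc' := le_max_left _ _
          have hn : (0:ℝ) ≤ ‖lam - 1‖ := norm_nonneg _
          nlinarith [hcase.le, hε.le]
        have h3 : m₃ * (Lc' * (cc * ε)) ≤ 1 / 2 := by
          have := hεle.trans (min_le_right _ _)
          rw [le_div_iff₀ (by positivity)] at this
          nlinarith
        have hm₃0 : (0:ℝ) ≤ m₃ := by linarith
        calc ‖t‖ ≤ m₃ * (Lc * ‖lam - 1‖) := h1
          _ ≤ m₃ * (Lc' * (cc * ε)) := mul_le_mul_of_nonneg_left h2 hm₃0
          _ ≤ 1 / 2 := h3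
      have htlt : ‖t‖ < 1 := lt_of_le_of_lt htle (by norm_num)
      have hu2 : IsUnit (1 - t) := aux_isUnit_one_sub t htlt
      have hfact : mu • (1 : Zs →L[ℂ] Zs) - Mop lam
          = (mu • (1 : Zs →L[ℂ] Zs) - Mop 1) * (1 - t) := by
        rw [mul_sub, mul_one, ht, ← mul_assoc, Ring.mul_inverse_cancel _ hmuu, one_mul]
        abel
      have hunit2 : IsUnit (mu • (1 : Zs →L[ℂ] Zs) - Mop lam) := by
        rw [hfact]; exact hmuu.mul hu2
      have hfin : (lam - 1) • (1 : Zs →L[ℂ] Zs) - (ε:ℂ) • Mop lam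
          = ((ε:ℂ) • (1 : Zs →L[ℂ] Zs)) * (mu • (1 : Zs →L[ℂ] Zs) - Mop lam) := by
        rw [smul_mul_assoc, one_mul, smul_sub, smul_smul, hmu,
          mul_div_cancel₀ _ hεne]
      rw [hfin]
      refine (IsUnit.mul ?_ hunit2)
      rw [← Algebra.algebraMap_eq_smul_one]
      exact (Ne.isUnit hεne).map (algebraMap ℂ (Zs →L[ℂ] Zs))
    · -- far from 1 : Neumann series
      push_neg at hcase
      have hccε : 0 < cc * ε := by positivity
      have hν : lam - 1 ≠ 0 := by
        intro h0
        rw [h0, norm_zero] at hcase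
        exact absurd (hccε.trans_le hcase) (lt_irrefl 0)
      set t : Zs →L[ℂ] Zs := (lam - 1)⁻¹ • ((ε:ℂ) • Mop lam) with ht
      have htle : ‖t‖ ≤ 1 / 2 := by
        have e1 : ‖t‖ = ‖lam - 1‖⁻¹ * (ε * ‖Mop lam‖) := by
          rw [ht, norm_smul ((lam - 1)⁻¹) ((ε:ℂ) • Mop lam), norm_smul ((ε:ℂ)) (Mop lam),
            norm_inv, hεcmplx]
        rw [e1]
        have h1 : ‖Mop lam‖ ≤ m₂ := hMopbound lam hl
        have h2 : ‖lam - 1‖⁻¹ ≤ (cc * ε)⁻¹ := by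
          apply inv_anti₀ hccε hcase
        have hm2pos : (0:ℝ) < m₂ := lt_of_lt_of_le one_pos hm₂1
        calc ‖lam - 1‖⁻¹ * (ε * ‖Mop lam‖) ≤ (cc * ε)⁻¹ * (ε * m₂) := by
              apply mul_le_mul h2 (by gcongr) (by positivity) (by positivity)
          _ = 1 / 2 := by rw [hcc]; field_simp
      have htlt : ‖t‖ < 1 := lt_of_le_of_lt htle (by norm_num)
      have hu2 : IsUnit (1 - t) := aux_isUnit_one_sub t htlt
      have hfact : (lam - 1) • (1 : Zs →L[ℂ] Zs) - (ε:ℂ) • Mop lam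
          = ((lam - 1) • (1 : Zs →L[ℂ] Zs)) * (1 - t) := by
        rw [mul_sub, mul_one, ht, smul_mul_assoc, one_mul, smul_smul,
          mul_inv_cancel₀ hν, one_smul]
      rw [hfact]
      refine IsUnit.mul ?_ hu2
      rw [← Algebra.algebraMap_eq_smul_one]
      exact (Ne.isUnit hν).map (algebraMap ℂ (Zs →L[ℂ] Zs))
  have hstabAe : ∀ lam ∈ spectrum ℂ (Ae A B C D (1 : Zs →L[ℂ] Zs) G2 K), ‖lam‖ < 1 := by
    intro lam hmem
    by_contra hge
    push_neg at hge
    have hl : 1 ≤ ‖lam‖ := hge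
    have ha := hAunit lam hl
    have hblk : lam • (1 : (X × Zs) →L[ℂ] (X × Zs)) - Ae A B C D (1 : Zs →L[ℂ] Zs) G2 K
        = blk (lam • (1 : X →L[ℂ] X) - A) (-(B.comp K)) (-(G2.comp C))
            ((lam - 1) • (1 : Zs →L[ℂ] Zs) - G2.comp (D.comp K)) := by
      ext v <;>
      · simp [Ae, blk_apply, Prod.ext_iff, sub_smul, sub_sub]
        try module
        try constructor <;> module
    have hschur : (lam - 1) • (1 : Zs →L[ℂ] Zs) - G2.comp (D.comp K)
        - (-(G2.comp C)).comp ((Ring.inverse (lam • (1 : X →L[ℂ] X) - A)).comp (-(B.comp K)))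
        = (lam - 1) • (1 : Zs →L[ℂ] Zs) - (ε:ℂ) • Mop lam := by
      refine ContinuousLinearMap.ext fun z => ?_
      simp only [hMop, hRA, hK, ContinuousLinearMap.sub_apply, ContinuousLinearMap.comp_apply,
        ContinuousLinearMap.add_apply, ContinuousLinearMap.neg_apply,
        ContinuousLinearMap.smul_apply, map_neg, map_smul, map_add, smul_neg, neg_neg]
      module
    have hunit : IsUnit (lam • (1 : (X × Zs) →L[ℂ] (X × Zs))
        - Ae A B C D (1 : Zs →L[ℂ] Zs) G2 K) := by
      rw [hblk]
      exact isUnit_blk _ _ _ _ ha (by rw [hschur]; exact hSchurUnit lam hl)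
    rw [spectrum.mem_iff, Algebra.algebraMap_eq_smul_one] at hmem
    exact hmem hunit
  refine ⟨hstabAe, ?_⟩
  intro w yref x₀ z₀
  have hA1u : IsUnit ((1 : X →L[ℂ] X) - A) := by
    have := hAunit 1 (by simp)
    rwa [one_smul] at this
  set R : X →L[ℂ] X := Ring.inverse ((1 : X →L[ℂ] X) - A) with hR
  set Top : Zs →L[ℂ] Zs := G2.comp ((P1 A B C D).comp K₀) with hTop
  have hTopu : IsUnit Top := by
    by_contra hnot
    have h0 : (0:ℂ) ∈ spectrum ℂ Top := (spectrum.zero_mem_iff ℂ).mpr hnot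
    have := hspec 0 h0
    simp at this
  have hYNinj : ∀ y₁ y₂ : Y, y₁ ∈ YN → y₂ ∈ YN → G₂₀ y₁ = G₂₀ y₂ → y₁ = y₂ := by
    intro y₁ y₂ h₁ h₂ heq
    have := hbij.1 (a₁ := ⟨y₁, h₁⟩) (a₂ := ⟨y₂, h₂⟩) heq
    exact congrArg Subtype.val this
  have hQmem : ∀ y : Y, QN y ∈ YN := by
    intro y; rw [← hranQN]; exact LinearMap.mem_range_self _ y
  have hTopapp : ∀ zz : Zs, G₂₀ (QN (P1 A B C D (K₀ zz))) = Top zz := fun zz => rfl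
  have hKsmul : ∀ zz : Zs, P1 A B C D (K zz) = (ε:ℂ) • P1 A B C D (K₀ zz) := by
    intro zz
    rw [hK, ContinuousLinearMap.smul_apply, map_smul]
  have huniq : ∀ z z' : Zs,
      QN (P1 A B C D (K z)) = QN yref - QN (Pd1 A Bd C Dd w) →
      QN (P1 A B C D (K z')) = QN yref - QN (Pd1 A Bd C Dd w) → z = z' := by
    intro z z' hz hz'
    have h1 : G₂₀ (QN (P1 A B C D (K z))) = G₂₀ (QN (P1 A B C D (K z'))) := by rw [hz, hz']
    have h2 : ∀ zz : Zs, G₂₀ (QN (P1 A B C D (K zz))) = (ε:ℂ) • Top zz := by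
      intro zz
      rw [hKsmul zz, map_smul, map_smul, hTopapp]
    rw [h2, h2] at h1
    have h3 : Top z = Top z' := smul_right_injective Zs hεne h1
    have h4 := congrArg (fun v => Ring.inverse Top v) h3
    simpa only [← ContinuousLinearMap.comp_apply, ← mul_def,
      Ring.inverse_mul_cancel _ hTopu, ContinuousLinearMap.one_apply] using h4
  set rhs : Y := QN yref - QN (Pd1 A Bd C Dd w) with hrhs
  set zsol : Zs := (ε:ℂ)⁻¹ • (Ring.inverse Top (G₂₀ rhs)) with hzsol
  have hzsolve : QN (P1 A B C D (K zsol)) = rhs := by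
    have hKz : K zsol = K₀ (Ring.inverse Top (G₂₀ rhs)) := by
      rw [hK, hzsol, ContinuousLinearMap.smul_apply, map_smul, smul_smul,
        mul_inv_cancel₀ hεne, one_smul]
    rw [hKz]
    refine hYNinj _ _ (hQmem _) (by rw [hrhs, ← map_sub]; exact hQmem _) ?_
    rw [hTopapp]
    rw [← ContinuousLinearMap.comp_apply, ← mul_def, Ring.mul_inverse_cancel _ hTopu,
      ContinuousLinearMap.one_apply]
  refine ⟨⟨zsol, hzsolve, fun z hzz => huniq z zsol hzz hzsolve⟩, ?_⟩
  intro z hz xe hxe0 hxerec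
  set AE : (X × Zs) →L[ℂ] (X × Zs) := Ae A B C D (1 : Zs →L[ℂ] Zs) G2 K with hAE
  set bvec : X × Zs := Be Bd Dd (ContinuousLinearMap.toSpanSingleton ℂ w)
      (-(ContinuousLinearMap.toSpanSingleton ℂ yref)) G2 (1:ℂ) with hbvec
  have hAEu : IsUnit ((1 : (X × Zs) →L[ℂ] (X × Zs)) - AE) := by
    have h1 : (1:ℂ) ∉ spectrum ℂ AE := fun hmem => by simpa using hstabAe 1 hmem
    rwa [spectrum.notMem_iff, Algebra.algebraMap_eq_smul_one, one_smul] at h1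
  set xbar : X × Zs := Ring.inverse ((1 : (X × Zs) →L[ℂ] (X × Zs)) - AE) bvec with hxbar
  have hfix : AE xbar + bvec = xbar := by
    have h1 : ((1 : (X × Zs) →L[ℂ] (X × Zs)) - AE) xbar = bvec := by
      rw [hxbar, ← ContinuousLinearMap.comp_apply, ← mul_def,
        Ring.mul_inverse_cancel _ hAEu, ContinuousLinearMap.one_apply]
    have h2 : xbar - AE xbar = bvec := by
      rw [← h1]; simp [ContinuousLinearMap.sub_apply]
    rw [← h2]; abel
  have hdiffpow : ∀ n, xe n - xbar = (AE ^ n) (xe 0 - xbar) := by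
    intro n
    induction n with
    | zero => simp
    | succ n ih =>
      calc xe (n+1) - xbar = AE (xe n) + bvec - (AE xbar + bvec) := by rw [hxerec n, hfix]
        _ = AE (xe n - xbar) := by rw [map_sub]; abel
        _ = AE ((AE ^ n) (xe 0 - xbar)) := by rw [ih]
        _ = (AE ^ (n+1)) (xe 0 - xbar) := by rw [pow_succ', ContinuousLinearMap.mul_apply]
  have hconv : Tendsto xe atTop (𝓝 xbar) := by
    have h0 : Tendsto (fun n => xe n - xbar) atTop (𝓝 0) := by
      have hb : Tendsto (fun n : ℕ => ‖AE ^ n‖ * ‖xe 0 - xbar‖) atTop (𝓝 0) := by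
        simpa using (aux_pow_tendsto AE hstabAe).mul_const ‖xe 0 - xbar‖
      refine squeeze_zero_norm' (Eventually.of_forall (fun n => ?_)) hb
      rw [hdiffpow n]; exact (AE ^ n).le_opNorm _
    have := h0.add_const xbar
    simpa using this
  have hCet : Tendsto (fun n => Ce C D K (xe n)
      + De Dd (ContinuousLinearMap.toSpanSingleton ℂ w)
          (-(ContinuousLinearMap.toSpanSingleton ℂ yref)) (1:ℂ)) atTop
      (𝓝 (Ce C D K xbar + De Dd (ContinuousLinearMap.toSpanSingleton ℂ w)
          (-(ContinuousLinearMap.toSpanSingleton ℂ yref)) (1:ℂ))) := by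
    exact (((Ce C D K).continuous.tendsto _).comp hconv).add_const _
  -- fixed point component equations
  have hfix1 : A xbar.1 + B (K xbar.2) + Bd w = xbar.1 := by
    have h := congrArg Prod.fst hfix
    simp only [hAE, Ae, hbvec, Be, Prod.fst_add, ContinuousLinearMap.prod_apply,
      ContinuousLinearMap.add_apply, ContinuousLinearMap.comp_apply,
      ContinuousLinearMap.coe_fst', ContinuousLinearMap.coe_snd',
      ContinuousLinearMap.toSpanSingleton_apply, one_smul] at h
    linear_combination (norm := module) h
  have hfix2 : G2 (C xbar.1) + xbar.2 + G2 (D (K xbar.2)) + G2 (Dd w + -yref) = xbar.2 := by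
    have h := congrArg Prod.snd hfix
    simp only [hAE, Ae, hbvec, Be, Prod.snd_add, ContinuousLinearMap.prod_apply,
      ContinuousLinearMap.add_apply, ContinuousLinearMap.comp_apply,
      ContinuousLinearMap.coe_fst', ContinuousLinearMap.coe_snd',
      ContinuousLinearMap.one_apply, ContinuousLinearMap.neg_apply,
      ContinuousLinearMap.toSpanSingleton_apply, one_smul] at h
    linear_combination (norm := module) h
  set einf : Y := C xbar.1 + D (K xbar.2) + (Dd w - yref) with heinf
  have hG2e : G2 einf = 0 := by
    have h9 : G2 (C xbar.1) + G2 (D (K xbar.2)) + G2 (Dd w + -yref) = 0 := by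
      linear_combination (norm := module) hfix2
    rw [heinf, map_add, map_add]
    rw [show Dd w - yref = Dd w + -yref from sub_eq_add_neg _ _]
    linear_combination (norm := module) h9
  have hQe : QN einf = 0 := by
    refine hYNinj _ _ (hQmem _) (Submodule.zero_mem YN) ?_
    rw [map_zero]
    exact hG2e
  have hxs : xbar.1 = R (B (K xbar.2) + Bd w) := by
    have h1 : ((1 : X →L[ℂ] X) - A) xbar.1 = B (K xbar.2) + Bd w := by
      rw [ContinuousLinearMap.sub_apply, ContinuousLinearMap.one_apply]
      linear_combination (norm := module) -hfix1
    have h2 := congrArg R h1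
    rwa [← ContinuousLinearMap.comp_apply, ← mul_def,
      Ring.inverse_mul_cancel _ hA1u, ContinuousLinearMap.one_apply] at h2
  have heinfP : einf = P1 A B C D (K xbar.2) + Pd1 A Bd C Dd w - yref := by
    rw [heinf, hxs]
    simp only [P1, Pd1, ContinuousLinearMap.add_apply, ContinuousLinearMap.comp_apply,
      map_add, hR]
    abel
  have hzstar : QN (P1 A B C D (K xbar.2)) = QN yref - QN (Pd1 A Bd C Dd w) := by
    have h0 : QN (P1 A B C D (K xbar.2) + Pd1 A Bd C Dd w - yref) = 0 := by
      rw [← heinfP]; exact hQe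
    rw [map_sub, map_add] at h0
    linear_combination (norm := module) h0
  have hzz : z = xbar.2 := huniq z xbar.2 hz hzstar
  have hlimit : Ce C D K xbar + De Dd (ContinuousLinearMap.toSpanSingleton ℂ w)
      (-(ContinuousLinearMap.toSpanSingleton ℂ yref)) (1:ℂ)
      = (P1 A B C D (K z) + Pd1 A Bd C Dd w - yref)
        - QN (P1 A B C D (K z) + Pd1 A Bd C Dd w - yref) := by
    rw [hzz, ← heinfP, hQe, sub_zero]
    simp only [Ce, De, heinf, ContinuousLinearMap.add_apply, ContinuousLinearMap.comp_apply,
      ContinuousLinearMap.coe_fst', ContinuousLinearMap.coe_snd',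
      ContinuousLinearMap.neg_apply, ContinuousLinearMap.toSpanSingleton_apply, one_smul]
    abel
  rw [tendsto_iff_norm_sub_tendsto_zero] at hCet
  rw [← hlimit]
  exact hCet
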